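/- Let M be the structure monoid of a finite RC-quasigroup of size n and class p ≥ 2, and Δ = ν(∏_{x∈X} x^{p-1}). Then Δ^p is central in M. -/
import Mathlib

/-- `PiAux op l y` is `Π_{r+1}(x₁, ..., x_r, y)` where `l = [x_r, ..., x₁]`. -/
def PiAux {X : Type*} (op : X → X → X) : List X → X → X
  | [], y => y
  | a :: l, y => op (PiAux op l a) (PiAux op l y)

/-- `SigmaRev op l` is the list of letters of the word `Σ_r(x₁, ..., x_r)` for
`l = [x_r, ..., x₁]` the reversed argument list. -/
def SigmaRev {X : Type*} (op : X → X → X) : List X → List X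
  | [] => []
  | a :: l => SigmaRev op l ++ [PiAux op l a]

/-- The defining relations `x(x ⊳ y) = y(y ⊳ x)` of the structure monoid of `(X, ⊳)`. -/
def structRels {X : Type*} (op : X → X → X) : FreeMonoid X → FreeMonoid X → Prop :=
  fun a b => ∃ x y : X,
    a = FreeMonoid.of x * FreeMonoid.of (op x y) ∧ b = FreeMonoid.of y * FreeMonoid.of (op y x)

section Aux

variable {X : Type*}

theorem piAux_append (op : X → X → X) (r s : List X) :
    ∀ b : X, PiAux op (s ++ r) b = PiAux op (s.map (PiAux op r)) (PiAux op r b) := by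
  induction s with
  | nil => intro b; rfl
  | cons a s ih =>
    intro b
    show op (PiAux op (s ++ r) a) (PiAux op (s ++ r) b) = _
    rw [ih a, ih b]
    rfl

theorem sigmaRev_append (op : X → X → X) (r s : List X) :
    SigmaRev op (s ++ r) = SigmaRev op r ++ SigmaRev op (s.map (PiAux op r)) := by
  induction s with
  | nil => simp [SigmaRev]
  | cons a s ih =>
    have h1 : SigmaRev op ((a :: s) ++ r) = SigmaRev op (s ++ r) ++ [PiAux op (s ++ r) a] := rfl
    have h2 : SigmaRev op ((a :: s).map (PiAux op r))
        = SigmaRev op (s.map (PiAux op r)) ++ [PiAux op (s.map (PiAux op r)) (PiAux op r a)] := rfl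
    rw [h1, h2, ih, piAux_append op r s a, List.append_assoc]

theorem piAux_bijective (op : X → X → X) (hL : ∀ x : X, Function.Bijective (op x)) :
    ∀ r : List X, Function.Bijective (PiAux op r)
  | [] => Function.bijective_id
  | a :: r => (hL (PiAux op r a)).comp (piAux_bijective op hL r)

theorem piAux_flatMap (op : X → X → X) (p : ℕ)
    (hclass : ∀ x y : X, PiAux op (List.replicate p x) y = y) :
    ∀ (xs : List X) (y : X), PiAux op (xs.flatMap fun x => List.replicate p x) y = y
  | [], _ => rfl
  | x :: xs, y => by
    have hid : ∀ z : X, PiAux op (xs.flatMap fun x => List.replicate p x) z = z :=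
      piAux_flatMap op p hclass xs
    have hmap : (List.replicate p x).map (PiAux op (xs.flatMap fun x => List.replicate p x))
        = List.replicate p x := by
      rw [List.map_replicate, hid x]
    rw [List.flatMap_cons, piAux_append, hid y, hmap, hclass]

theorem count_flatMap_replicate [DecidableEq X] (c : ℕ) :
    ∀ xs : List X, xs.Nodup → ∀ x ∈ xs,
      ((xs.flatMap fun y => List.replicate c y).count x) = c := by
  intro xs
  induction xs with
  | nil => simp
  | cons a xs ih =>
    intro hnd x hx
    rw [List.flatMap_cons, List.count_append, List.count_replicate]
    rcases List.mem_cons.mp hx with rfl | hx'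
    · have hzero : ((xs.flatMap fun y => List.replicate c y).count x) = 0 := by
        rw [List.count_eq_zero]
        intro hmem
        obtain ⟨y, hy, hxy⟩ := List.mem_flatMap.mp hmem
        exact (List.nodup_cons.mp hnd).1 ((List.eq_of_mem_replicate hxy) ▸ hy)
      simp [hzero]
    · have hne : x ≠ a := by rintro rfl; exact (List.nodup_cons.mp hnd).1 hx'
      have hba : (a == x) = false := by simp [Ne.symm hne]
      simp [hba, ih (List.nodup_cons.mp hnd).2 x hx']

/-- The canonical list with each element of `X` appearing `c` times. -/
noncomputable def constList (X : Type*) [Fintype X] (c : ℕ) : List X :=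
  (Finset.univ.toList : List X).flatMap fun x => List.replicate c x

theorem count_constList (X : Type*) [Fintype X] [DecidableEq X] (c : ℕ) (x : X) :
    (constList X c).count x = c :=
  count_flatMap_replicate c _ (Finset.nodup_toList _) x (by simp)

theorem piAux_constList {X : Type*} [Fintype X] (op : X → X → X) (p : ℕ)
    (hclass : ∀ x y : X, PiAux op (List.replicate p x) y = y) (y : X) :
    PiAux op (constList X p) y = y :=
  piAux_flatMap op p hclass _ y

end Aux


/-- in the structure monoid of a finite RC-quasigroup of class `p ≥ 2`, with
`Δ = ν(∏_{x∈X} x^{p-1})`, the element `Δ^p` is central. -/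
theorem stmt14 {X : Type*} [Fintype X] [DecidableEq X] (op : X → X → X)
    (hRC : ∀ x y z : X, op (op x y) (op x z) = op (op y x) (op y z))
    (hL : ∀ x : X, Function.Bijective (op x))
    (p : ℕ) (hp : 2 ≤ p)
    (hclass : ∀ x y : X, PiAux op (List.replicate p x) y = y)
    (ν : (X → ℕ) → PresentedMonoid (structRels op))
    (hν : Function.Bijective ν) (hone : ν 0 = 1)
    (hof : ∀ x : X, ν (Pi.single x 1) = PresentedMonoid.of (structRels op) x)
    (hSigma : ∀ l : List X,
      ν (fun x => l.count x)
        = ((SigmaRev op l.reverse).map (PresentedMonoid.of (structRels op))).prod) :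
    ∀ g : PresentedMonoid (structRels op),
      (ν (fun _ => p - 1)) ^ p * g = g * (ν (fun _ => p - 1)) ^ p := by
  intro g
  -- the fundamental product rule
  have hmul : ∀ l₁ l₂ : List X,
      ν (fun x => (l₁ ++ l₂).count x)
        = ν (fun x => l₁.count x) * ν (fun x => (l₂.map (PiAux op l₁.reverse)).count x) := by
    intro l₁ l₂
    rw [hSigma, hSigma, hSigma, List.reverse_append, sigmaRev_append, List.map_append,
      List.prod_append, List.map_reverse]
  have hmapcount : ∀ f : X → X, Function.Bijective f → ∀ (l : List X) (c : ℕ),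
      (∀ x, l.count x = c) → ∀ x, (l.map f).count x = c := by
    intro f hf l c hl x
    obtain ⟨a, rfl⟩ := hf.2 x
    rw [List.count_map_of_injective _ _ hf.1, hl]
  -- powers of constant multiplicity elements
  have hpow : ∀ c k : ℕ, ν (fun _ : X => k * c) = (ν fun _ : X => c) ^ k := by
    intro c k
    induction k with
    | zero =>
      have h0 : (fun _ : X => 0 * c) = (0 : X → ℕ) := funext fun _ => by simp
      rw [h0, hone, pow_zero]
    | succ k ih =>
      have h1 : (fun x : X => (constList X c ++ constList X (k * c)).count x)
          = fun _ : X => (k + 1) * c := by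
        funext x
        rw [List.count_append, count_constList, count_constList]
        ring
      have h2 : (fun x : X => ((constList X (k * c)).map
            (PiAux op (constList X c).reverse)).count x) = fun _ : X => k * c :=
        funext (hmapcount _ (piAux_bijective op hL _) _ _ (count_constList X (k * c)))
      have h3 : (fun x : X => (constList X c).count x) = fun _ : X => c :=
        funext (count_constList X c)
      calc (ν fun _ : X => (k + 1) * c)
          = ν (fun x : X => (constList X c ++ constList X (k * c)).count x) := by rw [h1]
        _ = ν (fun x : X => (constList X c).count x)
              * ν (fun x : X => ((constList X (k * c)).map
                  (PiAux op (constList X c).reverse)).count x) := hmul _ _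
        _ = (ν fun _ : X => c) * (ν fun _ : X => c) ^ k := by rw [h2, h3, ih]
        _ = (ν fun _ : X => c) ^ (k + 1) := (pow_succ' _ _).symm
  -- ν (const p) is central
  have hz : ∀ y : X, PresentedMonoid.of (structRels op) y * (ν fun _ : X => p)
      = (ν fun _ : X => p) * PresentedMonoid.of (structRels op) y := by
    intro y
    have csing : (fun x : X => [y].count x) = Pi.single y 1 := by
      funext x
      simp [List.count_singleton', Pi.single_apply, eq_comm]
    have e1 : ν (fun x : X => ([y] ++ constList X p).count x)
        = PresentedMonoid.of (structRels op) y * (ν fun _ : X => p) := by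
      rw [hmul]
      have c2 : (fun x : X => ((constList X p).map (PiAux op [y].reverse)).count x)
          = fun _ : X => p :=
        funext (hmapcount _ (piAux_bijective op hL _) _ _ (count_constList X p))
      rw [csing, c2, hof]
    have hid : ∀ z : X, PiAux op ((constList X p).reverse).reverse z = z := by
      intro z
      rw [List.reverse_reverse]
      exact piAux_constList op p hclass z
    have e2 : ν (fun x : X => ((constList X p).reverse ++ [y]).count x)
        = (ν fun _ : X => p) * PresentedMonoid.of (structRels op) y := by
      rw [hmul]
      have c3 : (fun x : X => ((constList X p).reverse).count x) = fun _ : X => p := by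
        funext x
        rw [List.count_reverse, count_constList]
      have c4 : ν (fun x : X => ([y].map (PiAux op ((constList X p).reverse).reverse)).count x)
          = PresentedMonoid.of (structRels op) y := by
        have : [y].map (PiAux op ((constList X p).reverse).reverse) = [y] := by
          simp only [List.map_cons, List.map_nil, hid y]
        rw [this, csing, hof]
      rw [c3, c4]
    have e3 : (fun x : X => ([y] ++ constList X p).count x)
        = fun x : X => ((constList X p).reverse ++ [y]).count x := by
      funext x
      simp only [List.count_append, List.count_reverse]
      omega
    rw [← e1, e3, e2]
  -- hence it commutes with everything
  have hzg : ∀ h : PresentedMonoid (structRels op),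
      (ν fun _ : X => p) * h = h * (ν fun _ : X => p) := by
    intro h
    induction h using PresentedMonoid.inductionOn with
    | _ w =>
      induction w using FreeMonoid.inductionOn with
      | one => rw [map_one, one_mul, mul_one]
      | of x => exact (hz x).symm
      | mul a b ha hb => rw [map_mul, ← mul_assoc, ha, mul_assoc, hb, mul_assoc]
  have hfin : (ν fun _ : X => p - 1) ^ p = (ν fun _ : X => p) ^ (p - 1) := by
    rw [← hpow (p - 1) p, ← hpow p (p - 1)]
    congr 1
    funext _
    ring
  rw [hfin]
  exact Commute.pow_left (hzg g) (p - 1)
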